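/- Let d ≥ 1 be an integer, R > 0, and let K : [0,∞) → ℝ be a bounded, nonnegative, measurable function supported in [0,R]. Let m ≥ 0 be an integer and let f₁ : ℝ^d → ℝ be an integrable function that is continuously differentiable in a neighborhood of 0. Then, as p → 0⁺, ∫_{ℝ^d} ‖ω‖^m K(‖ω‖/p) f₁(ω) dω = p^{d+m} f₁(0) ∫_{ℝ^d} ‖ω‖^m K(‖ω‖) dω + O(p^{d+m+1}). -/

import Mathlib

open MeasureTheory Filter Topology Asymptotics

/-- Leading-order kernel integral expansion: for a bounded nonnegative kernel `K`
supported in `[0,R]` and a density `f₁` that is continuously differentiable near `0`,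
`∫ ‖ω‖^m K(‖ω‖/p) f₁(ω) dω = p^(d+m) f₁(0) ∫ ‖ω‖^m K(‖ω‖) dω + O(p^(d+m+1))`
as `p → 0⁺`. -/
theorem stmt_2 (d : ℕ) (hd : 1 ≤ d) (R : ℝ) (hR : 0 < R)
    (K : ℝ → ℝ) (hKmeas : Measurable K) (hKnonneg : ∀ s, 0 ≤ K s)
    (hKbdd : ∃ M, ∀ s, K s ≤ M)
    (hKsupp : ∀ s, R < s → K s = 0)
    (m : ℕ)
    (f₁ : EuclideanSpace ℝ (Fin d) → ℝ) (hf₁int : Integrable f₁)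
    (hf₁smooth : ∃ ε > 0,
      ContDiffOn ℝ 1 f₁ (Metric.ball (0 : EuclideanSpace ℝ (Fin d)) ε)) :
    (fun p : ℝ =>
        (∫ ω : EuclideanSpace ℝ (Fin d), ‖ω‖ ^ m * K (‖ω‖ / p) * f₁ ω)
          - p ^ (d + m) * f₁ 0 * ∫ ω : EuclideanSpace ℝ (Fin d), ‖ω‖ ^ m * K ‖ω‖)
      =O[𝓝[>] (0 : ℝ)] fun p => p ^ (d + m + 1) := by
  classical
  obtain ⟨M, hM⟩ := hKbdd
  have hM0 : 0 ≤ M := le_trans (hKnonneg 0) (hM 0)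
  obtain ⟨ε, hε, hf⟩ := hf₁smooth
  have hCD : ContDiffAt ℝ 1 f₁ (0 : EuclideanSpace ℝ (Fin d)) :=
    hf.contDiffAt (Metric.ball_mem_nhds _ hε)
  obtain ⟨L, t, ht, hL⟩ := hCD.exists_lipschitzOnWith
  obtain ⟨δ, hδ, hδt⟩ := Metric.mem_nhds_iff.1 ht
  have hfinrank : Module.finrank ℝ (EuclideanSpace ℝ (Fin d)) = d := finrank_euclideanSpace_fin
  -- the rescaled kernel integrand
  set A : EuclideanSpace ℝ (Fin d) → ℝ := fun u => ‖u‖ ^ m * K ‖u‖ with hA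
  have hAmeas : Measurable A :=
    ((measurable_norm.pow measurable_const).mul (hKmeas.comp measurable_norm))
  have hAbound : ∀ u : EuclideanSpace ℝ (Fin d), |A u| ≤ (Metric.closedBall (0:EuclideanSpace ℝ (Fin d)) R).indicator (fun _ => R ^ m * M) u := by
    intro u
    by_cases hu : ‖u‖ ≤ R
    · rw [Set.indicator_of_mem (by simpa [Metric.mem_closedBall, dist_zero_right] using hu)]
      rw [abs_of_nonneg (mul_nonneg (pow_nonneg (norm_nonneg _) _) (hKnonneg _))]
      exact mul_le_mul (pow_le_pow_left₀ (norm_nonneg _) hu _) (hM _) (hKnonneg _)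
        (pow_nonneg hR.le _)
    · rw [Set.indicator_of_notMem (by simpa [Metric.mem_closedBall, dist_zero_right] using hu)]
      simp [hA, hKsupp _ (not_le.1 hu)]
  have hind : Integrable
      ((Metric.closedBall (0:EuclideanSpace ℝ (Fin d)) R).indicator fun _ => R ^ m * M) :=
    (integrable_indicator_iff measurableSet_closedBall).2
      (integrableOn_const measure_closedBall_lt_top.ne)
  have hAint : Integrable A :=
    hind.mono' hAmeas.aestronglyMeasurable
      (Filter.Eventually.of_forall fun u => by simpa [Real.norm_eq_abs] using hAbound u)
  set C : ℝ := R ^ m * M * (↑L * R) *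
    (volume (Metric.closedBall (0:EuclideanSpace ℝ (Fin d)) R)).toReal with hC
  rw [Asymptotics.isBigO_iff]
  refine ⟨C, ?_⟩
  filter_upwards [Ioo_mem_nhdsGT_of_mem
    (Set.left_mem_Ico.2 (div_pos hδ hR))] with p hp
  obtain ⟨hp0, hpδ⟩ := hp
  -- change of variables
  have hFsub : ∀ x : EuclideanSpace ℝ (Fin d),
      ‖p • x‖ ^ m * K (‖p • x‖ / p) * f₁ (p • x) = p ^ m * (A x * f₁ (p • x)) := by
    intro x
    have hn : ‖p • x‖ = p * ‖x‖ := by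
      rw [norm_smul, Real.norm_eq_abs, abs_of_pos hp0]
    rw [hn, mul_comm p ‖x‖, mul_div_assoc, div_self hp0.ne', mul_one, hA]
    ring
  have h1 := MeasureTheory.Measure.integral_comp_smul
    (volume : Measure (EuclideanSpace ℝ (Fin d)))
    (fun ω => ‖ω‖ ^ m * K (‖ω‖ / p) * f₁ ω) p
  rw [hfinrank, abs_of_pos (inv_pos.2 (pow_pos hp0 d)), smul_eq_mul] at h1
  have h2 : (∫ x : EuclideanSpace ℝ (Fin d), ‖p • x‖ ^ m * K (‖p • x‖ / p) * f₁ (p • x))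
      = p ^ m * ∫ u, A u * f₁ (p • u) := by
    simp_rw [hFsub]
    exact integral_const_mul _ _
  rw [h2, inv_mul_eq_div, eq_div_iff (pow_ne_zero d hp0.ne')] at h1
  have key : (∫ ω : EuclideanSpace ℝ (Fin d), ‖ω‖ ^ m * K (‖ω‖ / p) * f₁ ω)
      = p ^ (d + m) * ∫ u, A u * f₁ (p • u) := by
    rw [pow_add]
    linear_combination -h1
  -- integrability
  have h3 : Integrable (fun u : EuclideanSpace ℝ (Fin d) => f₁ (p • u)) :=
    hf₁int.comp_smul hp0.ne'
  have hAle : ∀ u : EuclideanSpace ℝ (Fin d), ‖A u‖ ≤ R ^ m * M := by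
    intro u
    rw [Real.norm_eq_abs]
    refine (hAbound u).trans ?_
    by_cases hu : u ∈ Metric.closedBall (0:EuclideanSpace ℝ (Fin d)) R
    · rw [Set.indicator_of_mem hu]
    · rw [Set.indicator_of_notMem hu]
      exact mul_nonneg (pow_nonneg hR.le m) hM0
  have hint2 : Integrable (fun u => A u * f₁ (p • u)) := by
    have := h3.bdd_mul (c := R ^ m * M) hAmeas.aestronglyMeasurable (Filter.Eventually.of_forall hAle)
    simpa [Pi.mul_def] using this
  -- split
  have hsplit : ∫ u, A u * (f₁ (p • u) - f₁ 0)
      = (∫ u, A u * f₁ (p • u)) - f₁ 0 * ∫ u, A u := by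
    simp_rw [mul_sub]
    rw [integral_sub hint2 (hAint.mul_const _), integral_mul_const]
    ring
  -- pointwise bound
  have hptwise : ∀ u : EuclideanSpace ℝ (Fin d),
      ‖A u * (f₁ (p • u) - f₁ 0)‖ ≤
        (Metric.closedBall (0:EuclideanSpace ℝ (Fin d)) R).indicator
          (fun _ => R ^ m * M * (↑L * R * p)) u := by
    intro u
    by_cases hu : ‖u‖ ≤ R
    · rw [Set.indicator_of_mem (by simpa [Metric.mem_closedBall, dist_zero_right] using hu)]
      rw [Real.norm_eq_abs, abs_mul]
      have hlip : |f₁ (p • u) - f₁ 0| ≤ ↑L * R * p := by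
        have hmem : p • u ∈ t := by
          apply hδt
          rw [Metric.mem_ball, dist_zero_right, norm_smul, Real.norm_eq_abs, abs_of_pos hp0]
          calc p * ‖u‖ ≤ p * R := by nlinarith
            _ < δ / R * R := by nlinarith
            _ = δ := by field_simp
        have h0mem : (0 : EuclideanSpace ℝ (Fin d)) ∈ t :=
          hδt (Metric.mem_ball_self hδ)
        have := hL.dist_le_mul _ hmem _ h0mem
        rw [Real.dist_eq, dist_zero_right, norm_smul, Real.norm_eq_abs, abs_of_pos hp0] at this
        calc |f₁ (p • u) - f₁ 0| ≤ ↑L * (p * ‖u‖) := this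
          _ ≤ ↑L * (p * R) := mul_le_mul_of_nonneg_left
              (mul_le_mul_of_nonneg_left hu hp0.le) L.coe_nonneg
          _ = ↑L * R * p := by ring
      calc |A u| * |f₁ (p • u) - f₁ 0| ≤ (R ^ m * M) * (↑L * R * p) := by
            apply mul_le_mul _ hlip (abs_nonneg _) (mul_nonneg (pow_nonneg hR.le m) hM0)
            exact (hAbound u).trans (le_of_eq (Set.indicator_of_mem
              (by simpa [Metric.mem_closedBall, dist_zero_right] using hu) _))
        _ = R ^ m * M * (↑L * R * p) := by ring
    · rw [Set.indicator_of_notMem (by simpa [Metric.mem_closedBall, dist_zero_right] using hu)]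
      have : K ‖u‖ = 0 := hKsupp _ (not_le.1 hu)
      simp [hA, this]
  have hindint : Integrable
      ((Metric.closedBall (0:EuclideanSpace ℝ (Fin d)) R).indicator
        fun _ => R ^ m * M * (↑L * R * p)) :=
    (integrable_indicator_iff measurableSet_closedBall).2
      (integrableOn_const measure_closedBall_lt_top.ne)
  have hbnd : ‖∫ u, A u * (f₁ (p • u) - f₁ 0)‖ ≤ C * p := by
    calc ‖∫ u, A u * (f₁ (p • u) - f₁ 0)‖
        ≤ ∫ u, (Metric.closedBall (0:EuclideanSpace ℝ (Fin d)) R).indicator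
            (fun _ => R ^ m * M * (↑L * R * p)) u :=
          norm_integral_le_of_norm_le hindint (Filter.Eventually.of_forall hptwise)
      _ = (volume (Metric.closedBall (0:EuclideanSpace ℝ (Fin d)) R)).toReal
            • (R ^ m * M * (↑L * R * p)) :=
          integral_indicator_const _ measurableSet_closedBall
      _ = C * p := by rw [smul_eq_mul, hC]; ring
  -- final assembly
  show ‖(∫ ω : EuclideanSpace ℝ (Fin d), ‖ω‖ ^ m * K (‖ω‖ / p) * f₁ ω)
      - p ^ (d + m) * f₁ 0 * ∫ u, A u‖ ≤ C * ‖p ^ (d + m + 1)‖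
  have heq : (∫ ω : EuclideanSpace ℝ (Fin d), ‖ω‖ ^ m * K (‖ω‖ / p) * f₁ ω)
      - p ^ (d + m) * f₁ 0 * ∫ u, A u
      = p ^ (d + m) * ∫ u, A u * (f₁ (p • u) - f₁ 0) := by
    rw [key, hsplit]
    ring
  have hppos : (0:ℝ) < p ^ (d + m + 1) := pow_pos hp0 _
  rw [heq, norm_mul, Real.norm_eq_abs (p ^ (d + m)), abs_of_pos (pow_pos hp0 _),
    Real.norm_eq_abs (p ^ (d + m + 1)), abs_of_pos hppos]
  calc p ^ (d + m) * ‖∫ u, A u * (f₁ (p • u) - f₁ 0)‖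
      ≤ p ^ (d + m) * (C * p) :=
        mul_le_mul_of_nonneg_left hbnd (pow_pos hp0 _).le
    _ = C * p ^ (d + m + 1) := by rw [pow_succ]; ring
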